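/- Let K be a field and P an ordering of K. Then A(P) is a subring of K which is a valuation ring of K (for every x ∈ K with x ≠ 0, either x ∈ A(P) or x⁻¹ ∈ A(P)), I(P) is an ideal of A(P), and I(P) is the unique maximal ideal of A(P); moreover the units of A(P) are exactly A(P) \ I(P). -/

import Mathlib

/-- An ordering of a (comm) ring `K`: `P + P ⊆ P`, `P·P ⊆ P`, `-1 ∉ P`, `P ∪ (-P) = K`. -/
def IsOrdering {K : Type*} [CommRing K] (P : Set K) : Prop :=
  (∀ x ∈ P, ∀ y ∈ P, x + y ∈ P) ∧ (∀ x ∈ P, ∀ y ∈ P, x * y ∈ P) ∧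
    (-1 : K) ∉ P ∧ ∀ x : K, x ∈ P ∨ -x ∈ P

/-- `sumsOfPowers K n` is the set of finite sums of `n`-th powers of elements of `K`. -/
def sumsOfPowers (K : Type*) [CommRing K] (n : ℕ) : Set K :=
  {a | ∃ (m : ℕ) (f : Fin m → K), a = ∑ i, f i ^ n}

/-- `A(P)`: the convex hull of `ℚ` in `K` with respect to the ordering `P`
(writing `x ≤_P y` for `y - x ∈ P`): `{a | ∃ r ∈ ℚ, -r ≤_P a ≤_P r}`. -/
def ratHull {K : Type*} [Field K] (P : Set K) : Set K :=
  {a | ∃ r : ℚ, a + (r : K) ∈ P ∧ (r : K) - a ∈ P}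

/-- `I(P) = {a | ∀ r ∈ ℚ, r > 0 → -r ≤_P a ≤_P r}`. -/
def ratInfinitesimals {K : Type*} [Field K] (P : Set K) : Set K :=
  {a | ∀ r : ℚ, 0 < r → a + (r : K) ∈ P ∧ (r : K) - a ∈ P}

namespace OrdAux

variable {K : Type*} [Field K] {P : Set K} (hP : IsOrdering P)
include hP

lemma addm {x y : K} (hx : x ∈ P) (hy : y ∈ P) : x + y ∈ P := hP.1 x hx y hy

omit hP in
set_option linter.unusedSectionVars false in
lemma memcongr {x y : K} (h : x ∈ P) (e : y = x) : y ∈ P := e ▸ h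
lemma mulm {x y : K} (hx : x ∈ P) (hy : y ∈ P) : x * y ∈ P := hP.2.1 x hx y hy

lemma sqm (x : K) : x * x ∈ P := by
  rcases hP.2.2.2 x with h | h
  · exact mulm hP h h
  · simpa [neg_mul_neg] using mulm hP h h

lemma onem : (1 : K) ∈ P := by simpa using sqm hP 1
lemma zerom : (0 : K) ∈ P := by simpa using sqm hP 0

lemma invm {x : K} (hx : x ∈ P) : x⁻¹ ∈ P := by
  rcases eq_or_ne x 0 with rfl | h
  · simpa using zerom hP
  · have hm : x * (x⁻¹ * x⁻¹) ∈ P := mulm hP hx (sqm hP _)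
    have e : x * (x⁻¹ * x⁻¹) = x⁻¹ := by field_simp
    rwa [e] at hm

lemma eq_zero {x : K} (h1 : x ∈ P) (h2 : -x ∈ P) : x = 0 := by
  by_contra hx
  apply hP.2.2.1
  have hm : (-x) * x⁻¹ ∈ P := mulm hP h2 (invm hP h1)
  have e : (-x) * x⁻¹ = -1 := by field_simp
  rwa [e] at hm

lemma natCast_mem (n : ℕ) : (n : K) ∈ P := by
  induction n with
  | zero => simpa using zerom hP
  | succ k ih => push_cast; exact addm hP ih (onem hP)

lemma natCast_eq_zero {n : ℕ} (h : (n : K) = 0) : n = 0 := by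
  cases n with
  | zero => rfl
  | succ k =>
    exfalso
    apply hP.2.2.1
    have e : ((k : K)) = -1 := by push_cast at h; linear_combination h
    exact e ▸ natCast_mem hP k

lemma charZero0 : CharZero K := by
  constructor
  intro m n h
  rcases le_total m n with hmn | hmn
  · have h0 : ((n - m : ℕ) : K) = 0 := by rw [Nat.cast_sub hmn, h, sub_self]
    have := natCast_eq_zero hP h0; omega
  · have h0 : ((m - n : ℕ) : K) = 0 := by rw [Nat.cast_sub hmn, h, sub_self]
    have := natCast_eq_zero hP h0; omega

lemma ratm {q : ℚ} (hq : 0 ≤ q) : (q : K) ∈ P := by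
  have hnum : ((q.num.toNat : ℕ) : K) = (q.num : K) := by
    exact_mod_cast congrArg (fun z : ℤ => (z : K)) (Int.toNat_of_nonneg (Rat.num_nonneg.mpr hq))
  have e : (q : K) = (q.num.toNat : K) * ((q.den : K))⁻¹ := by
    rw [Rat.cast_def, div_eq_mul_inv, hnum]
  exact e ▸ mulm hP (natCast_mem hP _) (invm hP (natCast_mem hP _))

lemma ratCast_ne_zero {q : ℚ} (hq : q ≠ 0) : (q : K) ≠ 0 := by
  haveI := charZero0 hP
  exact_mod_cast hq

lemma halfm {x : K} (h : x + x ∈ P) : x ∈ P := by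
  haveI := charZero0 hP
  have h2 : ((2 : K))⁻¹ ∈ P := invm hP (by exact_mod_cast natCast_mem hP 2)
  have hm : (x + x) * (2 : K)⁻¹ ∈ P := mulm hP h h2
  have e : (x + x) * (2 : K)⁻¹ = x := by
    field_simp
    ring
  rwa [e] at hm

lemma bound_mul {a b : K} {r s : ℚ} (h1 : a + r ∈ P) (h2 : (r : K) - a ∈ P)
    (h3 : b + s ∈ P) (h4 : (s : K) - b ∈ P) :
    a * b + ((r * s : ℚ) : K) ∈ P ∧ ((r * s : ℚ) : K) - a * b ∈ P := by
  haveI := charZero0 hP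
  constructor
  · have hm := addm hP (mulm hP h1 h3) (mulm hP h2 h4)
    refine halfm hP (memcongr hm ?_)
    push_cast; ring
  · have hm := addm hP (mulm hP h1 h4) (mulm hP h2 h3)
    refine halfm hP (memcongr hm ?_)
    push_cast; ring

lemma totm (x : K) : x ∈ P ∨ -x ∈ P := hP.2.2.2 x

def hull : Subring K where
  carrier := ratHull P
  zero_mem' := ⟨0, by simpa using zerom hP⟩
  one_mem' := ⟨1, by
    constructor
    · push_cast; exact addm hP (onem hP) (onem hP)
    · push_cast; simpa using zerom hP⟩
  add_mem' := by
    rintro a b ⟨r, hr1, hr2⟩ ⟨s, hs1, hs2⟩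
    haveI := charZero0 hP
    refine ⟨r + s, ?_, ?_⟩
    · refine memcongr (addm hP hr1 hs1) ?_
      push_cast; ring
    · refine memcongr (addm hP hr2 hs2) ?_
      push_cast; ring
  neg_mem' := by
    rintro a ⟨r, h1, h2⟩
    refine ⟨r, ?_, ?_⟩
    · rw [show -a + (r : K) = (r : K) - a from by ring]; exact h2
    · rw [show (r : K) - -a = a + (r : K) from by ring]; exact h1
  mul_mem' := by
    rintro a b ⟨r, hr1, hr2⟩ ⟨s, hs1, hs2⟩
    exact ⟨r * s, (bound_mul hP hr1 hr2 hs1 hs2).1, (bound_mul hP hr1 hr2 hs1 hs2).2⟩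

lemma inv_mem_hull {x : K} (hx : x ∈ P) {r : ℚ} (hr : 0 < r) (hxr : x - (r : K) ∈ P) :
    x⁻¹ ∈ ratHull P := by
  have hrP : (r : K) ∈ P := ratm hP hr.le
  have hrK : (r : K) ≠ 0 := ratCast_ne_zero hP hr.ne'
  have hx0 : x ≠ 0 := by
    rintro rfl
    have hneg : -(r : K) ∈ P := by simpa using hxr
    exact hrK (eq_zero hP hrP hneg)
  refine ⟨r⁻¹, ?_, ?_⟩
  · have : ((r⁻¹ : ℚ) : K) ∈ P := ratm hP (by positivity)
    exact addm hP (invm hP hx) this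
  · have hm : (x - (r : K)) * ((r : K)⁻¹ * x⁻¹) ∈ P :=
      mulm hP hxr (mulm hP (invm hP hrP) (invm hP hx))
    haveI := charZero0 hP
    have e : (x - (r : K)) * ((r : K)⁻¹ * x⁻¹) = ((r⁻¹ : ℚ) : K) - x⁻¹ := by
      push_cast
      calc (x - (r : K)) * ((r : K)⁻¹ * x⁻¹)
          = (x * x⁻¹) * (r : K)⁻¹ - ((r : K) * (r : K)⁻¹) * x⁻¹ := by ring
        _ = ((r : K))⁻¹ - x⁻¹ := by
            rw [mul_inv_cancel₀ hx0, mul_inv_cancel₀ hrK, one_mul, one_mul]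
    rwa [e] at hm

lemma valuation (x : K) (hx0 : x ≠ 0) : x ∈ ratHull P ∨ x⁻¹ ∈ ratHull P := by
  by_cases hx : x ∈ ratHull P
  · exact Or.inl hx
  right
  rcases totm hP x with h | h
  · -- x ∈ P, x ∉ hull
    have h1 : x + ((1 : ℚ) : K) ∈ P := by push_cast; exact addm hP h (onem hP)
    have h2 : ¬ (((1 : ℚ) : K) - x ∈ P) := fun h2 => hx ⟨1, h1, h2⟩
    have h3 : x - ((1 : ℚ) : K) ∈ P := by
      rcases totm hP (x - ((1 : ℚ) : K)) with h3 | h3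
      · exact h3
      · exact absurd (by simpa using h3) h2
    exact inv_mem_hull hP h one_pos h3
  · -- -x ∈ P
    have hnx : (-x) ∉ ratHull P := by
      intro ⟨r, hr1, hr2⟩
      exact hx ⟨r, by rwa [show x + (r : K) = (r : K) - -x from by ring],
        by rwa [show (r : K) - x = -x + (r : K) from by ring]⟩
    have h1 : (-x) + ((1 : ℚ) : K) ∈ P := by push_cast; exact addm hP h (onem hP)
    have h2 : ¬ (((1 : ℚ) : K) - (-x) ∈ P) := fun h2 => hnx ⟨1, h1, h2⟩
    have h3 : (-x) - ((1 : ℚ) : K) ∈ P := by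
      rcases totm hP ((-x) - ((1 : ℚ) : K)) with h3 | h3
      · exact h3
      · exact absurd (by simpa using h3) h2
    have := inv_mem_hull hP h one_pos h3
    have e : x⁻¹ = -((-x)⁻¹) := by field_simp
    rw [e]
    exact (hull hP).neg_mem this

lemma inv_of_not_inf {a : K} (ha : a ∉ ratInfinitesimals P) : a ≠ 0 ∧ a⁻¹ ∈ ratHull P := by
  have hz : (0 : K) ∈ ratInfinitesimals P := fun r hr =>
    ⟨by simpa using ratm hP hr.le, by simpa using ratm hP hr.le⟩
  have ha0 : a ≠ 0 := fun h => ha (h ▸ hz)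
  refine ⟨ha0, ?_⟩
  simp only [ratInfinitesimals, Set.mem_setOf_eq, not_forall] at ha
  obtain ⟨r, hr, hcon⟩ := ha
  rw [not_and_or] at hcon
  rcases hcon with hc | hc
  · -- a + r ∉ P, so -a - r ∈ P
    have h3 : (-a) - (r : K) ∈ P := by
      rcases totm hP ((-a) - (r : K)) with h3 | h3
      · exact h3
      · exact absurd (by rwa [show -((-a) - (r : K)) = a + (r : K) from by ring] at h3) hc
    have haP : -a ∈ P := by
      have := addm hP h3 (ratm hP hr.le)
      rwa [show (-a) - (r : K) + (r : K) = -a from by ring] at this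
    have := inv_mem_hull hP haP hr h3
    have e : a⁻¹ = -((-a)⁻¹) := by field_simp
    rw [e]
    exact (hull hP).neg_mem this
  · -- r - a ∉ P, so a - r ∈ P
    have h3 : a - (r : K) ∈ P := by
      rcases totm hP (a - (r : K)) with h3 | h3
      · exact h3
      · exact absurd (by rwa [show -(a - (r : K)) = (r : K) - a from by ring] at h3) hc
    have haP : a ∈ P := by
      have := addm hP h3 (ratm hP hr.le)
      rwa [show a - (r : K) + (r : K) = a from by ring] at this
    exact inv_mem_hull hP haP hr h3

def infIdeal : Ideal (hull hP) where
  carrier := {a | (a : K) ∈ ratInfinitesimals P}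
  zero_mem' := by
    intro r hr
    constructor
    · simpa using ratm hP hr.le
    · simpa using ratm hP hr.le
  add_mem' := by
    intro a b ha hb r hr
    have h1 := ha (r / 2) (by positivity)
    have h2 := hb (r / 2) (by positivity)
    haveI := charZero0 hP
    constructor
    · refine memcongr (addm hP h1.1 h2.1) ?_
      push_cast; ring
    · refine memcongr (addm hP h1.2 h2.2) ?_
      push_cast; ring
  smul_mem' := by
    intro c a ha r hr
    obtain ⟨s, hs1, hs2⟩ := c.2
    set t : ℚ := |s| + 1 with ht_def
    have ht : 0 < t := by positivity
    have htsp : ((t - s : ℚ) : K) ∈ P := ratm hP (by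
      have := neg_abs_le s
      have := le_abs_self s
      simp only [ht_def]; linarith)
    haveI := charZero0 hP
    have hc1 : (c : K) + (t : K) ∈ P := by
      refine memcongr (addm hP hs1 htsp) ?_
      push_cast; ring
    have hc2 : ((t : ℚ) : K) - (c : K) ∈ P := by
      refine memcongr (addm hP hs2 htsp) ?_
      push_cast; ring
    have haa := ha (r / t) (by positivity)
    have hb := bound_mul hP hc1 hc2 haa.1 haa.2
    have e : t * (r / t) = r := by field_simp
    rw [e] at hb
    constructor
    · refine memcongr hb.1 ?_
      push_cast [smul_eq_mul]; ring
    · refine memcongr hb.2 ?_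
      push_cast [smul_eq_mul]; ring

lemma one_not_inf : (1 : K) ∉ ratInfinitesimals P := by
  intro h
  have h2 := (h (1/2) (by norm_num)).2
  haveI := charZero0 hP
  have e : ((1/2 : ℚ) : K) - 1 = -((2 : K)⁻¹) := by push_cast; ring
  rw [e] at h2
  apply hP.2.2.1
  have hm : (-((2 : K)⁻¹)) * 2 ∈ P := mulm hP h2 (by exact_mod_cast natCast_mem hP 2)
  have e2 : (-((2 : K)⁻¹)) * 2 = -1 := by
    have h2ne : (2 : K) ≠ 0 := two_ne_zero
    field_simp
  rwa [e2] at hm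

lemma infIdeal_ne_top : infIdeal hP ≠ ⊤ :=
  (Ideal.ne_top_iff_one _).mpr (fun h => one_not_inf hP h)

lemma unit_of_not_mem {x : hull hP} (hx : (x : K) ∉ ratInfinitesimals P) : IsUnit x := by
  obtain ⟨hx0, hxinv⟩ := inv_of_not_inf hP hx
  exact IsUnit.of_mul_eq_one (a := x) ⟨_, hxinv⟩ (Subtype.ext (mul_inv_cancel₀ hx0))

lemma infIdeal_isMaximal : (infIdeal hP).IsMaximal := by
  rw [Ideal.isMaximal_iff]
  constructor
  · exact fun h => one_not_inf hP h
  · intro J x hIJ hxI hxJ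
    have hu := unit_of_not_mem hP hxI
    obtain ⟨u, hu⟩ := hu
    have : (1 : hull hP) = ↑u⁻¹ * x := by rw [← hu]; simp
    rw [this]
    exact J.mul_mem_left _ hxJ

end OrdAux

/-- For an ordering `P` of a field `K`: `A(P)` is a valuation subring of `K`, `I(P)` is an ideal
of `A(P)` which is its unique maximal ideal, and the units of `A(P)` are `A(P) \ I(P)`. -/
theorem stmt4 {K : Type*} [Field K] (P : Set K) (hP : IsOrdering P) :
    ∃ A : Subring K, (A : Set K) = ratHull P ∧
      (∀ x : K, x ≠ 0 → x ∈ A ∨ x⁻¹ ∈ A) ∧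
      ∃ I : Ideal A, (∀ a : A, a ∈ I ↔ (a : K) ∈ ratInfinitesimals P) ∧
        I.IsMaximal ∧ (∀ J : Ideal A, J.IsMaximal → J = I) ∧
        ∀ a : A, IsUnit a ↔ (a : K) ∉ ratInfinitesimals P := by
  refine ⟨OrdAux.hull hP, rfl, OrdAux.valuation hP, OrdAux.infIdeal hP,
    fun a => Iff.rfl, OrdAux.infIdeal_isMaximal hP, ?_, ?_⟩
  · intro J hJ
    have hle : J ≤ OrdAux.infIdeal hP := by
      intro x hxJ
      by_contra hxI
      have hu := OrdAux.unit_of_not_mem hP hxI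
      exact hJ.ne_top (Ideal.eq_top_of_isUnit_mem J hxJ hu)
    exact hJ.eq_of_le (OrdAux.infIdeal_ne_top hP) hle
  · intro a
    constructor
    · intro hu ha
      have hmem : a ∈ OrdAux.infIdeal hP := ha
      exact OrdAux.infIdeal_ne_top hP (Ideal.eq_top_of_isUnit_mem _ hmem hu)
    · exact OrdAux.unit_of_not_mem hP
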